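/- Let r and d be natural numbers with r ≥ 1 and d ≥ 1, let S be the free solvable group of rank r and derived length d, let h ∈ S be a nontrivial element, and let H = Subgroup.zpowers h be the cyclic subgroup generated by h. Then H is a retract of S if and only if the image of h in the abelianization of S is primitive, i.e., if and only if there exists a group homomorphism χ : S →* Multiplicative ℤ with χ h = Multiplicative.ofAdd 1. -/

import Mathlib

instance derivedSeriesNormal (G : Type*) [Group G] (n : ℕ) :
    (derivedSeries G n).Normal :=
  derivedSeries_normal G n

/-- A subgroup `H` of a group `G` is a retract of `G`. -/
def IsRetract {G : Type*} [Group G] (H : Subgroup G) : Prop :=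
  ∃ φ : G →* G, (∀ x ∈ H, φ x = x) ∧ ∀ y, φ y ∈ H

/-- The abelianization of a free group is torsion-free. -/
lemma abelianization_freeGroup_torsionfree {α : Type*} (a : Abelianization (FreeGroup α))
    (n : ℤ) (hn : a ^ n = 1) (ha : a ≠ 1) : n = 0 := by
  have e := FreeAbelianGroup.equivFinsupp α
  have h1 : (n • (Additive.ofMul a) : FreeAbelianGroup α) = 0 := by
    have : Additive.ofMul (a ^ n) = Additive.ofMul (1 : Abelianization (FreeGroup α)) := by
      rw [hn]
    simpa using this
  have h2 : n • e (Additive.ofMul a) = 0 := by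
    have := congrArg e h1; exact (map_zsmul e n _).symm.trans (this.trans (map_zero e))
  rcases smul_eq_zero.mp h2 with h | h
  · exact h
  · exfalso
    apply ha
    have : (Additive.ofMul a : FreeAbelianGroup α) = 0 := by
      apply e.injective; exact h.trans (map_zero e).symm
    simpa using this

lemma derivedSeries_le_of_le {G : Type*} [Group G] {m n : ℕ} (h : m ≤ n) :
    derivedSeries G n ≤ derivedSeries G m := by
  induction n with
  | zero => obtain rfl := Nat.le_zero.mp h; exact le_refl _
  | succ n ih =>
    rcases eq_or_lt_of_le h with rfl | h'
    · exact le_refl _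
    · exact le_trans
        (by rw [derivedSeries_succ]; exact Subgroup.commutator_le_left _ _)
        (ih (Nat.lt_succ_iff.mp h'))

theorem cyclic_retract_iff_primitive_in_abelianization
    (r d : ℕ) (hr : 1 ≤ r) (hd : 1 ≤ d)
    (h : FreeGroup (Fin r) ⧸ derivedSeries (FreeGroup (Fin r)) d)
    (hne : h ≠ 1) :
    IsRetract (Subgroup.zpowers h) ↔
      ∃ χ : (FreeGroup (Fin r) ⧸ derivedSeries (FreeGroup (Fin r)) d) →*
        Multiplicative ℤ, χ h = Multiplicative.ofAdd 1 := by
  let F := FreeGroup (Fin r)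
  let N := derivedSeries F d
  let S := F ⧸ N
  -- N is contained in the commutator subgroup of F
  have hN : N ≤ commutator F := by
    rw [← derivedSeries_one]
    exact derivedSeries_le_of_le hd
  -- the induced map from S to the abelianization of F
  have hker : ∀ x ∈ N, Abelianization.of x = (1 : Abelianization F) := by
    intro x hx
    exact (QuotientGroup.eq_one_iff x).mpr (hN hx)
  let g : S →* Abelianization F := QuotientGroup.lift N Abelianization.of hker
  constructor
  · rintro ⟨φ, hfix, hmem⟩
    have hφh : φ h = h := hfix h (Subgroup.mem_zpowers h)
    -- the image of φ is commutative
    have hcomm : ∀ y z : S, Commute (φ y) (φ z) := by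
      intro y z
      obtain ⟨m, hm⟩ := Subgroup.mem_zpowers_iff.mp (hmem y)
      obtain ⟨n, hn⟩ := Subgroup.mem_zpowers_iff.mp (hmem z)
      rw [← hm, ← hn]
      exact (Commute.refl h).zpow_zpow m n
    -- φ kills the commutator subgroup of S
    have hφcomm : commutator S ≤ φ.ker := by
      rw [commutator_def]
      refine Subgroup.commutator_le.mpr fun a _ b _ => ?_
      rw [MonoidHom.mem_ker, map_commutatorElement]
      exact (hcomm a b).commutator_eq
    -- g h ≠ 1
    have hgh : g h ≠ 1 := by
      intro hgh1
      obtain ⟨x, rfl⟩ := QuotientGroup.mk'_surjective N h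
      have hx : Abelianization.of x = 1 := hgh1
      have hxc : x ∈ commutator F := (QuotientGroup.eq_one_iff x).mp hx
      have hxm : (QuotientGroup.mk' N) x ∈ commutator S := by
        rw [← derivedSeries_one,
          ← map_derivedSeries_eq (QuotientGroup.mk'_surjective N) 1]
        exact Subgroup.mem_map_of_mem _ (by rwa [← derivedSeries_one] at hxc)
      have h1 : φ ((QuotientGroup.mk' N) x) = 1 := hφcomm hxm
      exact hne (by rw [← hφh, h1])
    -- h has infinite order
    have hinf : ∀ n : ℤ, h ^ n = 1 → n = 0 := by
      intro n hn
      have : (g h) ^ n = 1 := by rw [← map_zpow, hn, map_one]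
      exact abelianization_freeGroup_torsionfree (g h) n this hgh
    have hinj : ∀ m n : ℤ, h ^ m = h ^ n → m = n := by
      intro m n hmn
      have h0 : h ^ (m - n) = 1 := by
        rw [zpow_sub, hmn, mul_inv_cancel]
      have := hinf _ h0
      omega
    -- extract the exponent
    have hex : ∀ y : S, ∃ n : ℤ, h ^ n = φ y := fun y =>
      Subgroup.mem_zpowers_iff.mp (hmem y)
    choose f hf using hex
    refine ⟨{ toFun := fun y => Multiplicative.ofAdd (f y),
              map_one' := ?_, map_mul' := ?_ }, ?_⟩
    · have : h ^ f 1 = h ^ (0 : ℤ) := by rw [hf 1, map_one, zpow_zero]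
      simpa using hinj _ _ this
    · intro y z
      have h1 : h ^ f (y * z) = h ^ (f y + f z) := by
        rw [hf (y * z), map_mul, ← hf y, ← hf z, zpow_add]
      have := hinj _ _ h1
      simp only [this]
      rfl
    · have h1 : h ^ f h = h ^ (1 : ℤ) := by rw [hf h, hφh, zpow_one]
      have := hinj _ _ h1
      simp [this]
  · rintro ⟨χ, hχ⟩
    refine ⟨(zpowersHom S h).comp χ, ?_, ?_⟩
    · intro x hx
      obtain ⟨n, hn⟩ := Subgroup.mem_zpowers_iff.mp hx
      rw [← hn]
      show zpowersHom S h (χ (h ^ n)) = h ^ n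
      rw [map_zpow, hχ, zpowersHom_apply]
      norm_num
    · intro y
      exact Subgroup.mem_zpowers_iff.mpr ⟨(χ y).toAdd, rfl⟩
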